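/- Let (X,d) be a metric space, p,q ∈ X with d_0(p,q) < ∞. For each n, let c_n = (x_0^n,...,x_{N_n}^n) be an ε_n-chain from p to q with L(c_n) → d_0(p,q) and ε_n → 0. Suppose there are indices k_n such that x_{k_n}^n d-converges to some x ∈ X. Then d_0(p,q) = d_0(p,x) + d_0(x,q); moreover Σ_{k=1}^{k_n} d(x_{k-1}^n,x_k^n) → d_0(p,x) and Σ_{k=k_n+1}^{N_n} d(x_{k-1}^n,x_k^n) → d_0(x,q) as n → ∞. -/

import Mathlib

open Filter Set
open scoped ENNReal

variable {X : Type*}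

/-- The length of the chain `x 0, x 1, …, x n` with respect to the distance `ρ`. -/
noncomputable def chainLengthOf (ρ : X → X → ℝ≥0∞) (x : ℕ → X) (n : ℕ) : ℝ≥0∞ :=
  ∑ k ∈ Finset.range n, ρ (x k) (x (k + 1))

/-- `x 0, …, x n` is an `ε`-chain from `p` to `q` with respect to `ρ`. -/
def IsChainOf (ρ : X → X → ℝ≥0∞) (ε : ℝ≥0∞) (p q : X) (x : ℕ → X) (n : ℕ) : Prop :=
  x 0 = p ∧ x n = q ∧ ∀ k < n, ρ (x k) (x (k + 1)) ≤ ε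

/-- `d_ε`: the infimum of lengths of `ε`-chains joining `p` to `q`. -/
noncomputable def chainDistOf (ρ : X → X → ℝ≥0∞) (ε : ℝ≥0∞) (p q : X) : ℝ≥0∞ :=
  ⨅ (n : ℕ) (x : ℕ → X) (_ : IsChainOf ρ ε p q x n), chainLengthOf ρ x n

/-- `d_0 = sup_{ε > 0} d_ε`. -/
noncomputable def chainMetricOf (ρ : X → X → ℝ≥0∞) (p q : X) : ℝ≥0∞ :=
  ⨆ (ε : ℝ≥0∞) (_ : 0 < ε), chainDistOf ρ ε p q

/-- `d_ε` for a metric space, with `ρ = edist`. -/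
noncomputable def chainDist [PseudoEMetricSpace X] (ε : ℝ≥0∞) (p q : X) : ℝ≥0∞ :=
  chainDistOf (fun a b => edist a b) ε p q

/-- `d_0` for a metric space, with `ρ = edist`. -/
noncomputable def chainMetric [PseudoEMetricSpace X] (p q : X) : ℝ≥0∞ :=
  chainMetricOf (fun a b => edist a b) p q

/-- The length of a path `γ : [0,1] → X` with respect to `ρ`:
the supremum over partitions `0 = t 0 ≤ t 1 ≤ … ≤ t n = 1` of the partition sums. -/
noncomputable def pathLengthOf (ρ : X → X → ℝ≥0∞) (γ : ℝ → X) : ℝ≥0∞ :=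
  ⨆ (n : ℕ) (t : ℕ → ℝ) (_ : t 0 = 0 ∧ t n = 1 ∧ Monotone t),
    ∑ k ∈ Finset.range n, ρ (γ (t k)) (γ (t (k + 1)))

noncomputable def pathLength [PseudoEMetricSpace X] (γ : ℝ → X) : ℝ≥0∞ :=
  pathLengthOf (fun a b => edist a b) γ

/-- Continuity of a path `γ` on `[0,1]` with respect to the distance `ρ`. -/
def ContinuousWrt (ρ : X → X → ℝ≥0∞) (γ : ℝ → X) : Prop :=
  ∀ t ∈ Icc (0 : ℝ) 1,
    Tendsto (fun s => ρ (γ s) (γ t)) (nhdsWithin t (Icc (0 : ℝ) 1)) (nhds 0)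

/-- The induced length metric with respect to `ρ`: the infimum of `ρ`-lengths of
`ρ`-continuous paths joining `p` to `q`. -/
noncomputable def lengthMetricOf (ρ : X → X → ℝ≥0∞) (p q : X) : ℝ≥0∞ :=
  ⨅ (γ : ℝ → X) (_ : ContinuousWrt ρ γ ∧ γ 0 = p ∧ γ 1 = q), pathLengthOf ρ γ

/-- The induced length metric `d̄` of a metric space. -/
noncomputable def lengthMetric [PseudoEMetricSpace X] (p q : X) : ℝ≥0∞ :=
  lengthMetricOf (fun a b => edist a b) p q

/-! ### auxiliary lemmas -/

lemma chainDistOf_le {ρ : X → X → ℝ≥0∞} {ε : ℝ≥0∞} {p q : X} {x : ℕ → X} {n : ℕ}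
    (h : IsChainOf ρ ε p q x n) : chainDistOf ρ ε p q ≤ chainLengthOf ρ x n :=
  iInf_le_of_le n <| iInf_le_of_le x <| iInf_le _ h

lemma IsChainOf.mono {ρ : X → X → ℝ≥0∞} {ε ε' : ℝ≥0∞} {p q : X} {x : ℕ → X} {n : ℕ}
    (h : IsChainOf ρ ε p q x n) (hε : ε ≤ ε') : IsChainOf ρ ε' p q x n :=
  ⟨h.1, h.2.1, fun k hk => (h.2.2 k hk).trans hε⟩

lemma chainDistOf_anti {ρ : X → X → ℝ≥0∞} {ε ε' : ℝ≥0∞} (hε : ε ≤ ε') (p q : X) :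
    chainDistOf ρ ε' p q ≤ chainDistOf ρ ε p q := by
  refine le_iInf fun n => le_iInf fun x => le_iInf fun hx => chainDistOf_le (hx.mono hε)

lemma chainDist_le_chainMetric [PseudoEMetricSpace X] {ε : ℝ≥0∞} (hε : 0 < ε) (p q : X) :
    chainDist ε p q ≤ chainMetric p q :=
  le_iSup₂_of_le ε hε le_rfl

/-- prefix chain bound -/
lemma chainDist_prefix [PseudoEMetricSpace X] {ε : ℝ≥0∞} {p q : X} {x : ℕ → X} {n k : ℕ}
    (hc : IsChainOf (fun a b => edist a b) ε p q x n) (hk : k ≤ n) {x₀ : X}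
    (hx₀ : edist (x k) x₀ ≤ ε) :
    chainDist ε p x₀ ≤ (∑ i ∈ Finset.range k, edist (x i) (x (i + 1))) + edist (x k) x₀ := by
  set z : ℕ → X := fun i => if i ≤ k then x i else x₀ with hz
  have hchain : IsChainOf (fun a b => edist a b) ε p x₀ z (k + 1) := by
    refine ⟨by simp [hz, hc.1], by simp [hz], fun i hi => ?_⟩
    rcases Nat.lt_or_ge i k with h | h
    · have h1 : i ≤ k := h.le
      have h2 : i + 1 ≤ k := h
      simp only [hz, if_pos h1, if_pos h2]
      exact hc.2.2 i (lt_of_lt_of_le h hk)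
    · have hik : i = k := le_antisymm (Nat.lt_succ_iff.mp hi) h
      subst hik
      simp only [hz, if_pos le_rfl, if_neg (Nat.not_succ_le_self i)]
      exact hx₀
  refine (chainDistOf_le hchain).trans ?_
  rw [chainLengthOf, Finset.sum_range_succ]
  have h1 : edist (z k) (z (k + 1)) = edist (x k) x₀ := by
    simp [hz, Nat.not_succ_le_self k]
  rw [h1]
  refine add_le_add_left (le_of_eq (Finset.sum_congr rfl fun i hi => ?_)) _
  rw [Finset.mem_range] at hi
  simp [hz, hi.le, Nat.succ_le_of_lt hi]

/-- suffix chain bound -/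
lemma chainDist_suffix [PseudoEMetricSpace X] {ε : ℝ≥0∞} {p q : X} {x : ℕ → X} {n k : ℕ}
    (hc : IsChainOf (fun a b => edist a b) ε p q x n) (hk : k ≤ n) {x₀ : X}
    (hx₀ : edist (x k) x₀ ≤ ε) :
    chainDist ε x₀ q ≤ edist (x k) x₀ + ∑ i ∈ Finset.Ico k n, edist (x i) (x (i + 1)) := by
  set z : ℕ → X := fun i => if i = 0 then x₀ else x (k + (i - 1)) with hz
  have hchain : IsChainOf (fun a b => edist a b) ε x₀ q z ((n - k) + 1) := by
    refine ⟨by simp [hz], ?_, fun i hi => ?_⟩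
    · have : k + (n - k) = n := Nat.add_sub_cancel' hk
      simp [hz, this, hc.2.1]
    · rcases Nat.eq_zero_or_pos i with h | h
      · subst h
        simpa [hz, edist_comm] using hx₀
      · obtain ⟨m, rfl⟩ := Nat.exists_eq_add_of_le h
        have hm : m < n - k := by omega
        have h1 : z (1 + m) = x (k + m) := by simp [hz]
        have h2 : z (1 + m + 1) = x (k + m + 1) := by simp [hz]; congr 1; omega
        rw [h1, h2]
        exact hc.2.2 (k + m) (by omega)
  refine (chainDistOf_le hchain).trans ?_
  rw [chainLengthOf, Finset.sum_range_succ', Finset.sum_Ico_eq_sum_range]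
  rw [add_comm]
  have h0 : edist (z 0) (z 1) = edist (x k) x₀ := by
    simp [hz, edist_comm]
  rw [h0]
  refine add_le_add_right (le_of_eq (Finset.sum_congr rfl fun i _ => ?_)) _
  have h1 : z (i + 1) = x (k + i) := by simp [hz]
  have h2 : z (i + 1 + 1) = x (k + i + 1) := by simp [hz]; ring_nf
  rw [h1, h2]

lemma IsChainOf.concat {ρ : X → X → ℝ≥0∞} {ε : ℝ≥0∞} {p r q : X} {y z : ℕ → X} {n m : ℕ}
    (hy : IsChainOf ρ ε p r y n) (hz : IsChainOf ρ ε r q z m) :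
    ∃ w : ℕ → X, IsChainOf ρ ε p q w (n + m) ∧
      chainLengthOf ρ w (n + m) = chainLengthOf ρ y n + chainLengthOf ρ z m := by
  set w : ℕ → X := fun i => if i ≤ n then y i else z (i - n) with hw
  have hw1 : ∀ j, w (n + j) = z j := by
    intro j
    rcases Nat.eq_zero_or_pos j with h | h
    · subst h; simp [hw, hy.2.1, hz.1]
    · have : ¬ n + j ≤ n := by omega
      simp only [hw, if_neg this]
      congr 1; omega
  have hw2 : ∀ i ≤ n, w i = y i := fun i hi => by simp [hw, hi]
  refine ⟨w, ⟨by rw [hw2 0 (Nat.zero_le n), hy.1], by rw [hw1 m, hz.2.1], fun i hi => ?_⟩, ?_⟩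
  · rcases Nat.lt_or_ge i n with h | h
    · rw [hw2 i h.le, hw2 (i + 1) h]
      exact hy.2.2 i h
    · obtain ⟨j, rfl⟩ := Nat.exists_eq_add_of_le h
      rw [hw1 j, show n + j + 1 = n + (j + 1) from rfl, hw1 (j + 1)]
      exact hz.2.2 j (by omega)
  · rw [chainLengthOf, Finset.sum_range_add]
    congr 1
    · exact Finset.sum_congr rfl fun i hi => by
        rw [Finset.mem_range] at hi
        rw [hw2 i hi.le, hw2 (i + 1) hi]
    · exact Finset.sum_congr rfl fun j _ => by
        rw [hw1 j, show n + j + 1 = n + (j + 1) from rfl, hw1 (j + 1)]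

lemma chainDist_triangle [PseudoEMetricSpace X] (ε : ℝ≥0∞) (p r q : X) :
    chainDist ε p q ≤ chainDist ε p r + chainDist ε r q := by
  refine ENNReal.le_of_forall_pos_le_add fun δ hδ hfin => ?_
  have hδ2 : (0 : ℝ≥0∞) < δ / 2 := by
    simp [ENNReal.div_pos_iff, hδ.ne']
  have h1 : chainDist ε p r < ⊤ := (le_self_add.trans_lt hfin)
  have h2 : chainDist ε r q < ⊤ := (le_add_self.trans_lt hfin)
  have e1 : chainDist ε p r < chainDist ε p r + δ / 2 := ENNReal.lt_add_right h1.ne hδ2.ne'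
  have e2 : chainDist ε r q < chainDist ε r q + δ / 2 := ENNReal.lt_add_right h2.ne hδ2.ne'
  rw [chainDist, chainDistOf] at e1 e2
  simp only [iInf_lt_iff] at e1 e2
  obtain ⟨n, y, hy, hylen⟩ := e1
  obtain ⟨m, z, hz, hzlen⟩ := e2
  obtain ⟨w, hwchain, hwlen⟩ := hy.concat hz
  calc chainDist ε p q ≤ chainLengthOf (fun a b => edist a b) w (n + m) := chainDistOf_le hwchain
    _ = chainLengthOf (fun a b => edist a b) y n + chainLengthOf (fun a b => edist a b) z m :=
        hwlen
    _ ≤ (chainDist ε p r + δ / 2) + (chainDist ε r q + δ / 2) := add_le_add hylen.le hzlen.le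
    _ = chainDist ε p r + chainDist ε r q + ((δ : ℝ≥0∞) / 2 + δ / 2) := by ring
    _ = chainDist ε p r + chainDist ε r q + δ := by rw [ENNReal.add_halves]

lemma chainMetric_triangle [PseudoEMetricSpace X] (p r q : X) :
    chainMetric p q ≤ chainMetric p r + chainMetric r q :=
  iSup₂_le fun ε hε => (chainDist_triangle ε p r q).trans
    (add_le_add (chainDist_le_chainMetric hε p r) (chainDist_le_chainMetric hε r q))


/-- additivity of `d_0` along converging chain points. If `c n` are
`ε n`-chains from `p` to `q` with `L(c n) → d_0(p,q)`, `ε n → 0`, and the points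
`x n (k n)` (with `k n ∈ {1,…,N n}`) `d`-converge to `x₀`, then
`d_0(p,q) = d_0(p,x₀) + d_0(x₀,q)` and the two partial sums of the chains converge to
`d_0(p,x₀)` and `d_0(x₀,q)` respectively. -/
theorem chainMetric_additivity {X : Type*} [MetricSpace X] (p q : X)
    (hfin : chainMetric p q ≠ ⊤)
    (ε : ℕ → ℝ≥0∞) (hεpos : ∀ n, 0 < ε n) (hε : Tendsto ε atTop (nhds 0))
    (N : ℕ → ℕ) (x : ℕ → ℕ → X)
    (hc : ∀ n, IsChainOf (fun a b => edist a b) (ε n) p q (x n) (N n))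
    (hL : Tendsto (fun n => chainLengthOf (fun a b => edist a b) (x n) (N n)) atTop
      (nhds (chainMetric p q)))
    (k : ℕ → ℕ) (hk : ∀ n, 1 ≤ k n ∧ k n ≤ N n) (x₀ : X)
    (hx : Tendsto (fun n => x n (k n)) atTop (nhds x₀)) :
    chainMetric p q = chainMetric p x₀ + chainMetric x₀ q ∧
    Tendsto (fun n => ∑ i ∈ Finset.range (k n), edist (x n i) (x n (i + 1))) atTop
      (nhds (chainMetric p x₀)) ∧
    Tendsto (fun n => ∑ i ∈ Finset.Ico (k n) (N n), edist (x n i) (x n (i + 1))) atTop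
      (nhds (chainMetric x₀ q)) := by
  set A := fun n => ∑ i ∈ Finset.range (k n), edist (x n i) (x n (i + 1)) with hA
  set B := fun n => ∑ i ∈ Finset.Ico (k n) (N n), edist (x n i) (x n (i + 1)) with hB
  set e := fun n => edist (x n (k n)) x₀ with he
  have hLn : ∀ n, chainLengthOf (fun a b => edist a b) (x n) (N n) = A n + B n := fun n =>
    (Finset.sum_range_add_sum_Ico _ (hk n).2).symm
  have hLtend : Tendsto (fun n => A n + B n) atTop (nhds (chainMetric p q)) :=
    Tendsto.congr hLn hL
  have hetend : Tendsto e atTop (nhds 0) := by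
    rw [ENNReal.tendsto_nhds_zero]
    intro δ hδ
    obtain ⟨M, hM⟩ := EMetric.tendsto_atTop.mp hx δ hδ
    exact eventually_atTop.2 ⟨M, fun n hn => (hM n hn).le⟩
  have hεev : ∀ δ : ℝ≥0∞, 0 < δ → ∀ᶠ n in atTop, ε n ≤ δ := fun δ hδ =>
    ENNReal.tendsto_nhds_zero.mp hε δ hδ
  have heev : ∀ δ : ℝ≥0∞, 0 < δ → ∀ᶠ n in atTop, e n ≤ δ := fun δ hδ =>
    ENNReal.tendsto_nhds_zero.mp hetend δ hδ
  have hev : ∀ δ : ℝ≥0∞, 0 < δ → ∀ᶠ n in atTop,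
      chainDist δ p x₀ ≤ A n + e n ∧ chainDist δ x₀ q ≤ e n + B n := by
    intro δ hδ
    filter_upwards [hεev δ hδ, heev δ hδ] with n h1 h2
    have hc' : IsChainOf (fun a b => edist a b) δ p q (x n) (N n) := (hc n).mono h1
    exact ⟨chainDist_prefix hc' (hk n).2 h2, chainDist_suffix hc' (hk n).2 h2⟩
  -- liminf lower bounds
  have hliminfA : chainMetric p x₀ ≤ liminf A atTop := by
    refine iSup₂_le fun δ hδ => ?_
    refine ENNReal.le_of_forall_pos_le_add fun η hη _ => ?_
    have hη' : (0 : ℝ≥0∞) < η := ENNReal.coe_pos.2 hη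
    have hev' : ∀ᶠ n in atTop, chainDist δ p x₀ ≤ A n + η := by
      filter_upwards [hev δ hδ, heev η hη'] with n h1 h2
      exact h1.1.trans (add_le_add_right h2 _)
    calc chainDist δ p x₀ ≤ liminf (fun n => A n + (η : ℝ≥0∞)) atTop :=
          le_liminf_of_le (by isBoundedDefault) hev'
      _ = liminf A atTop + η :=
          liminf_add_const atTop A η (by isBoundedDefault) (by isBoundedDefault)
  have hliminfB : chainMetric x₀ q ≤ liminf B atTop := by
    refine iSup₂_le fun δ hδ => ?_
    refine ENNReal.le_of_forall_pos_le_add fun η hη _ => ?_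
    have hη' : (0 : ℝ≥0∞) < η := ENNReal.coe_pos.2 hη
    have hev' : ∀ᶠ n in atTop, chainDist δ x₀ q ≤ B n + η := by
      filter_upwards [hev δ hδ, heev η hη'] with n h1 h2
      exact h1.2.trans (by rw [add_comm]; exact add_le_add_right h2 _)
    calc chainDist δ x₀ q ≤ liminf (fun n => B n + (η : ℝ≥0∞)) atTop :=
          le_liminf_of_le (by isBoundedDefault) hev'
      _ = liminf B atTop + η :=
          liminf_add_const atTop B η (by isBoundedDefault) (by isBoundedDefault)
  -- the key tendsto with error terms
  have htend2 : Tendsto (fun n => (A n + B n) + (e n + e n)) atTop (nhds (chainMetric p q)) := by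
    have := hLtend.add (hetend.add hetend)
    simpa using this
  have htend1 : Tendsto (fun n => (A n + B n) + e n) atTop (nhds (chainMetric p q)) := by
    have := hLtend.add hetend
    simpa using this
  -- equality
  have hABD : chainMetric p x₀ + chainMetric x₀ q ≤ chainMetric p q := by
    refine ENNReal.biSup_add_biSup_le' (p := fun δ : ℝ≥0∞ => 0 < δ) (q := fun δ : ℝ≥0∞ => 0 < δ)
      ⟨1, one_pos⟩ ⟨1, one_pos⟩ fun δ1 h1 δ2 h2 => ?_
    have hδ : 0 < min δ1 δ2 := lt_min h1 h2
    have hb : ∀ᶠ n in atTop,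
        chainDist δ1 p x₀ + chainDist δ2 x₀ q ≤ (A n + B n) + (e n + e n) := by
      filter_upwards [hev (min δ1 δ2) hδ] with n hn
      have e1 : chainDist δ1 p x₀ ≤ A n + e n :=
        le_trans (chainDistOf_anti (min_le_left δ1 δ2) p x₀) hn.1
      have e2 : chainDist δ2 x₀ q ≤ e n + B n :=
        le_trans (chainDistOf_anti (min_le_right δ1 δ2) x₀ q) hn.2
      calc chainDist δ1 p x₀ + chainDist δ2 x₀ q ≤ (A n + e n) + (e n + B n) := add_le_add e1 e2
        _ = (A n + B n) + (e n + e n) := by ring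
    exact ge_of_tendsto htend2 hb
  have heq : chainMetric p q = chainMetric p x₀ + chainMetric x₀ q :=
    le_antisymm (chainMetric_triangle p x₀ q) hABD
  have hAtop : chainMetric p x₀ ≠ ⊤ := by
    intro h
    rw [heq, h] at hfin
    simp at hfin
  have hBtop : chainMetric x₀ q ≠ ⊤ := by
    intro h
    rw [heq, h] at hfin
    simp at hfin
  have hlimsupD : limsup (fun n => (A n + B n) + e n) atTop = chainMetric p q :=
    htend1.limsup_eq
  -- limsup upper bounds
  have hlimsupA : limsup A atTop ≤ chainMetric p x₀ := by
    have key : limsup A atTop + chainMetric x₀ q ≤ chainMetric p q := by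
      rw [chainMetric, chainMetricOf, ENNReal.add_biSup' ⟨1, one_pos⟩]
      refine iSup₂_le fun δ hδ => ?_
      have hev' : (fun n => A n + chainDist δ x₀ q) ≤ᶠ[atTop]
          fun n => (A n + B n) + e n := by
        filter_upwards [hev δ hδ] with n hn
        calc A n + chainDist δ x₀ q ≤ A n + (e n + B n) := add_le_add_right hn.2 _
          _ = (A n + B n) + e n := by ring
      calc limsup A atTop + chainDist δ x₀ q
          = limsup (fun n => A n + chainDist δ x₀ q) atTop :=
            (limsup_add_const atTop A _ (by isBoundedDefault) (by isBoundedDefault)).symm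
        _ ≤ limsup (fun n => (A n + B n) + e n) atTop := limsup_le_limsup hev'
        _ = chainMetric p q := hlimsupD
    rw [heq] at key
    exact (ENNReal.add_le_add_iff_right hBtop).mp key
  have hlimsupB : limsup B atTop ≤ chainMetric x₀ q := by
    have key : chainMetric p x₀ + limsup B atTop ≤ chainMetric p q := by
      rw [chainMetric, chainMetricOf, ENNReal.biSup_add' ⟨1, one_pos⟩]
      refine iSup₂_le fun δ hδ => ?_
      have hev' : (fun n => chainDist δ p x₀ + B n) ≤ᶠ[atTop]
          fun n => (A n + B n) + e n := by
        filter_upwards [hev δ hδ] with n hn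
        calc chainDist δ p x₀ + B n ≤ (A n + e n) + B n := add_le_add_left hn.1 _
          _ = (A n + B n) + e n := by ring
      calc chainDist δ p x₀ + limsup B atTop
          = limsup (fun n => chainDist δ p x₀ + B n) atTop :=
            (limsup_const_add atTop B _ (by isBoundedDefault) (by isBoundedDefault)).symm
        _ ≤ limsup (fun n => (A n + B n) + e n) atTop := limsup_le_limsup hev'
        _ = chainMetric p q := hlimsupD
    rw [heq] at key
    exact (ENNReal.add_le_add_iff_left hAtop).mp key
  exact ⟨heq, tendsto_of_le_liminf_of_limsup_le hliminfA hlimsupA,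
    tendsto_of_le_liminf_of_limsup_le hliminfB hlimsupB⟩
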